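/- In the linear case f(x) = λx, every solution x of the controlled system with x(0) = x₀ satisfies x(3kτ) = αᵏ·x₀ for all k ∈ ℕ, where α = e^{3λτ}·(1 + ετ·(1 − e^{λτ})·e^{−2λτ}). In particular x(3τ) = e^{3λτ}·(1 + ετ·(1 − e^{λτ})·e^{−2λτ})·x₀. -/

import Mathlib

/-- A solution of the ODFC system based on a delayed states difference:
`ẋ(t) = f(x(t)) + ε(t)·(x(t−2τ) − x(t−τ))` with `ε(t) = 0` on `[3kτ,(3k+2)τ)` and
`ε(t) = ε` on `[(3k+2)τ,(3k+3)τ)`, with initial value `x₀`. -/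
def IsSolDiff (f : ℝ → ℝ) (ε τ x₀ : ℝ) (x : ℝ → ℝ) : Prop :=
  ContinuousOn x (Set.Ici 0) ∧ x 0 = x₀ ∧
  (∀ k : ℕ, ∀ t ∈ Set.Ico (3 * (k : ℝ) * τ) ((3 * (k : ℝ) + 2) * τ),
      HasDerivWithinAt x (f (x t)) (Set.Ici t) t) ∧
  (∀ k : ℕ, ∀ t ∈ Set.Ico ((3 * (k : ℝ) + 2) * τ) ((3 * (k : ℝ) + 3) * τ),
      HasDerivWithinAt x (f (x t) + ε * (x (t - 2 * τ) - x (t - τ))) (Set.Ici t) t)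

/-- Variation of constants on an interval: if `x' = lam·x + c·e^{lam(t-a)}` (right
derivatives on `Ico a b`) then `x t = (x a + c(t-a))·e^{lam(t-a)}` on `Icc a b`. -/
lemma ode_key (lam c a b : ℝ) (x : ℝ → ℝ)
    (hc : ContinuousOn x (Set.Icc a b))
    (hd : ∀ t ∈ Set.Ico a b,
      HasDerivWithinAt x (lam * x t + c * Real.exp (lam * (t - a))) (Set.Ici t) t) :
    ∀ t ∈ Set.Icc a b, x t = (x a + c * (t - a)) * Real.exp (lam * (t - a)) := by
  set F : ℝ → ℝ := fun t => x t * Real.exp (-(lam * (t - a))) - c * (t - a) with hFdef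
  have hFc : ContinuousOn F (Set.Icc a b) := by
    apply ContinuousOn.sub
    · exact hc.mul (Real.continuous_exp.comp (by continuity)).continuousOn
    · exact (continuous_const.mul (continuous_id.sub continuous_const)).continuousOn
  have hF0 : ∀ t ∈ Set.Ico a b, HasDerivWithinAt F 0 (Set.Ici t) t := by
    intro t ht
    have h0 : HasDerivAt (fun s : ℝ => -(lam * (s - a))) (-lam) t := by
      simpa using (((hasDerivAt_id t).sub_const a).const_mul lam).fun_neg
    have h2 : HasDerivAt (fun s : ℝ => Real.exp (-(lam * (s - a))))
        (Real.exp (-(lam * (t - a))) * (-lam)) t := h0.exp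
    have h3 : HasDerivAt (fun s : ℝ => c * (s - a)) c t := by
      simpa using ((hasDerivAt_id t).sub_const a).const_mul c
    have h4 := ((hd t ht).mul h2.hasDerivWithinAt).sub h3.hasDerivWithinAt
    refine h4.congr_deriv (Eq.symm ?_)
    have he : Real.exp (lam * (t - a)) * Real.exp (-(lam * (t - a))) = 1 := by
      rw [← Real.exp_add]; simp
    linear_combination -c * he
  have hFconst := constant_of_has_deriv_right_zero hFc hF0
  intro t ht
  have := hFconst t ht
  have hFa : F a = x a := by simp [hFdef]
  have hFt : F t = x t * Real.exp (-(lam * (t - a))) - c * (t - a) := rfl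
  have he : Real.exp (lam * (t - a)) * Real.exp (-(lam * (t - a))) = 1 := by
    rw [← Real.exp_add]; simp
  have this2 : x t * Real.exp (-(lam * (t - a))) - c * (t - a) = x a := by
    rw [← hFt, this, hFa]
  linear_combination Real.exp (lam * (t - a)) * this2 - x t * he

/-- One period of the ODFC system multiplies the state by `α`. -/
lemma odfc_step (lam ε τ : ℝ) (hτ : 0 < τ) (x : ℝ → ℝ) (x₀ : ℝ)
    (hx : IsSolDiff (fun y => lam * y) ε τ x₀ x) (k : ℕ) :
    x ((3 * (k : ℝ) + 3) * τ) =
      (Real.exp (3 * lam * τ) *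
        (1 + ε * τ * (1 - Real.exp (lam * τ)) * Real.exp (-(2 * lam * τ)))) *
      x (3 * (k : ℝ) * τ) := by
  obtain ⟨hcont, hx0, hfree, hctrl⟩ := hx
  set A : ℝ := 3 * (k : ℝ) * τ with hA
  have hA0 : 0 ≤ A := by positivity
  -- free interval [A, A+2τ]
  have hsub1 : Set.Icc A (A + 2 * τ) ⊆ Set.Ici 0 := fun t ht => le_trans hA0 ht.1
  have hfree' : ∀ t ∈ Set.Icc A (A + 2 * τ),
      x t = (x A + 0 * (t - A)) * Real.exp (lam * (t - A)) := by
    apply ode_key lam 0 A (A + 2 * τ) x (hcont.mono hsub1)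
    intro t ht
    have ht' : t ∈ Set.Ico (3 * (k : ℝ) * τ) ((3 * (k : ℝ) + 2) * τ) := by
      constructor
      · exact ht.1
      · have := ht.2; linarith [this, show (3 * (k : ℝ) + 2) * τ = A + 2 * τ by rw [hA]; ring]
    have := hfree k t ht'
    simpa using this
  have hfree'' : ∀ t ∈ Set.Icc A (A + 2 * τ), x t = x A * Real.exp (lam * (t - A)) := by
    intro t ht; have := hfree' t ht; simpa using this
  -- controlled interval [A+2τ, A+3τ]
  set c : ℝ := ε * x A * (1 - Real.exp (lam * τ)) with hc
  have hsub2 : Set.Icc (A + 2 * τ) (A + 3 * τ) ⊆ Set.Ici 0 := fun t ht => by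
    have := ht.1; simp only [Set.mem_Ici]; linarith
  have hctrl' : ∀ t ∈ Set.Icc (A + 2 * τ) (A + 3 * τ),
      x t = (x (A + 2 * τ) + c * (t - (A + 2 * τ))) * Real.exp (lam * (t - (A + 2 * τ))) := by
    apply ode_key lam c (A + 2 * τ) (A + 3 * τ) x (hcont.mono hsub2)
    intro t ht
    have ht' : t ∈ Set.Ico ((3 * (k : ℝ) + 2) * τ) ((3 * (k : ℝ) + 3) * τ) := by
      constructor
      · have := ht.1; have e : (3 * (k : ℝ) + 2) * τ = A + 2 * τ := by rw [hA]; ring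
        linarith [e ▸ this]
      · have := ht.2; have e : (3 * (k : ℝ) + 3) * τ = A + 3 * τ := by rw [hA]; ring
        rw [e]; exact this
    have hD := hctrl k t ht'
    -- rewrite the delayed values
    have hm2 : t - 2 * τ ∈ Set.Icc A (A + 2 * τ) := by
      constructor
      · have := ht.1; linarith
      · have := ht.2; linarith
    have hm1 : t - τ ∈ Set.Icc A (A + 2 * τ) := by
      constructor
      · have := ht.1; linarith
      · have := ht.2; linarith
    have hv2 : x (t - 2 * τ) = x A * Real.exp (lam * (t - 2 * τ - A)) := hfree'' _ hm2
    have hv1 : x (t - τ) = x A * Real.exp (lam * (t - τ - A)) := hfree'' _ hm1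
    have hEq : lam * x t + ε * (x (t - 2 * τ) - x (t - τ))
        = lam * x t + c * Real.exp (lam * (t - (A + 2 * τ))) := by
      rw [hv2, hv1, hc]
      have e2 : lam * (t - 2 * τ - A) = lam * (t - (A + 2 * τ)) := by ring
      have e1 : lam * (t - τ - A) = lam * (t - (A + 2 * τ)) + lam * τ := by ring
      rw [e2, e1, Real.exp_add]
      ring
    have := hD
    simp only at this
    rw [hEq] at this
    exact this
  -- evaluate at the endpoints
  have hmid : x (A + 2 * τ) = x A * Real.exp (lam * (2 * τ)) := by
    have := hfree'' (A + 2 * τ) ⟨by linarith, le_refl _⟩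
    simpa using this
  have hend : x (A + 3 * τ)
      = (x (A + 2 * τ) + c * τ) * Real.exp (lam * τ) := by
    have := hctrl' (A + 3 * τ) ⟨by linarith, le_refl _⟩
    have e1 : A + 3 * τ - (A + 2 * τ) = τ := by ring
    rw [e1] at this
    exact this
  have eA : (3 * (k : ℝ) + 3) * τ = A + 3 * τ := by rw [hA]; ring
  rw [eA, hend, hmid, hc]
  -- exp identities
  have e3 : Real.exp (3 * lam * τ) = Real.exp (lam * (2 * τ)) * Real.exp (lam * τ) := by
    rw [← Real.exp_add]; ring_nf
  have e4 : Real.exp (-(2 * lam * τ)) * Real.exp (lam * (2 * τ)) = 1 := by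
    rw [← Real.exp_add]; ring_nf; simp
  rw [e3]
  linear_combination (-(Real.exp (lam * τ) * ε * τ * (1 - Real.exp (lam * τ)) * x A)) * e4

/-- In the linear case `f(x) = λx`, any solution of the states-difference ODFC system
satisfies `x(3kτ) = αᵏ·x₀` with `α = e^{3λτ}(1 + ετ(1 − e^{λτ})e^{−2λτ})`; in particular
`x(3τ) = e^{3λτ}(1 + ετ(1 − e^{λτ})e^{−2λτ})·x₀`. -/
theorem odfc_states_difference_linear_period_iterates
    (lam ε τ x₀ : ℝ) (hlam : 0 < lam) (hτ : 0 < τ)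
    (x : ℝ → ℝ) (hx : IsSolDiff (fun y => lam * y) ε τ x₀ x) :
    (∀ k : ℕ, x (3 * (k : ℝ) * τ) =
        (Real.exp (3 * lam * τ) *
          (1 + ε * τ * (1 - Real.exp (lam * τ)) * Real.exp (-(2 * lam * τ)))) ^ k * x₀) ∧
    x (3 * τ) = Real.exp (3 * lam * τ) *
        (1 + ε * τ * (1 - Real.exp (lam * τ)) * Real.exp (-(2 * lam * τ))) * x₀ := by
  set α : ℝ := Real.exp (3 * lam * τ) *
      (1 + ε * τ * (1 - Real.exp (lam * τ)) * Real.exp (-(2 * lam * τ))) with hα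
  have main : ∀ k : ℕ, x (3 * (k : ℝ) * τ) = α ^ k * x₀ := by
    intro k
    induction k with
    | zero => simpa using hx.2.1
    | succ n ih =>
        have hstep := odfc_step lam ε τ hτ x x₀ hx n
        have e : (3 * ((n : ℝ) + 1) * τ) = (3 * (n : ℝ) + 3) * τ := by ring
        push_cast
        rw [e, hstep, ih, ← hα]
        ring
  constructor
  · exact main
  · have := main 1
    simpa using this
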